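/- arXiv:1212.1407 — 2 statements merged into one kernel-verified Lean document; each statement's English description precedes it below -/
import Mathlib

section
/- Given a family E of subsets of a finite nonempty set Z with ∅, Z ∈ E, E closed under pairwise intersection, and the augmentation property (every X ∈ E with X ≠ Z has z ∈ Z \ X with X ∪ {z} ∈ E), the operator cl(A) = intersection of all members of E containing A is a closure operator with the anti-exchange property. -/
/-- Given a family `E` of subsets of a finite nonempty set with `∅, Z ∈ E`, closed under
pairwise intersection and satisfying augmentation, the operator
`cl A = ⋂ { X ∈ E | A ⊆ X }` is a closure operator with the anti-exchange property. -/
theorem closure_of_family_antiExchange {Z : Type*} [Fintype Z] [Nonempty Z]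
    (E : Set (Set Z))
    (hempty : (∅ : Set Z) ∈ E) (huniv : (Set.univ : Set Z) ∈ E)
    (hinter : ∀ X ∈ E, ∀ Y ∈ E, X ∩ Y ∈ E)
    (haug : ∀ X ∈ E, X ≠ Set.univ → ∃ z ∉ X, X ∪ {z} ∈ E) :
    let cl : Set Z → Set Z := fun A => ⋂₀ {X | X ∈ E ∧ A ⊆ X}
    (∀ A : Set Z, A ⊆ cl A) ∧
    (∀ A B : Set Z, A ⊆ B → cl A ⊆ cl B) ∧
    (∀ A : Set Z, cl (cl A) = cl A) ∧
    (∀ (A : Set Z) (x y : Z), x ≠ y → y ∈ cl (A ∪ {x}) → y ∉ cl A →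
      x ∉ cl (A ∪ {y})) := by
  intro cl
  -- finite intersections of members of E are in E
  have hsInter : ∀ S : Set (Set Z), (∀ X ∈ S, X ∈ E) → ⋂₀ S ∈ E := by
    intro S
    refine Set.Finite.induction_on (motive := fun S _ => (∀ X ∈ S, X ∈ E) → ⋂₀ S ∈ E)
      S (Set.toFinite S) (fun _ => by simpa using huniv) ?_
    intro a s _ _ ih hS
    rw [Set.sInter_insert]
    exact hinter a (hS a (Set.mem_insert a s)) _ (ih fun X hX => hS X (Set.mem_insert_of_mem a hX))
  have hclE : ∀ A : Set Z, cl A ∈ E := fun A =>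
    hsInter _ (fun X hX => hX.1)
  have hext : ∀ A : Set Z, A ⊆ cl A := by
    intro A z hz
    exact fun X hX => hX.2 hz
  have hmono : ∀ A B : Set Z, A ⊆ B → cl A ⊆ cl B := by
    intro A B hAB z hz X hX
    exact hz X ⟨hX.1, hAB.trans hX.2⟩
  have hle : ∀ (A X : Set Z), X ∈ E → A ⊆ X → cl A ⊆ X := by
    intro A X hX hAX z hz
    exact hz X ⟨hX, hAX⟩
  refine ⟨hext, hmono, ?_, ?_⟩
  · intro A
    exact le_antisymm (hle _ _ (hclE A) le_rfl) (hext _)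
  · intro A x y hxy hyx hyA hxAy
    -- x ∉ cl A, else cl (A ∪ {x}) ⊆ cl A
    have hxA : x ∉ cl A := by
      intro hx
      exact hyA (hle (A ∪ {x}) (cl A) (hclE A)
        (Set.union_subset (hext A) (by simpa using hx)) hyx)
    -- take maximal F
    set S : Set (Set Z) := {X | X ∈ E ∧ cl A ⊆ X ∧ x ∉ X ∧ y ∉ X} with hSdef
    have hSne : S.Nonempty := ⟨cl A, hclE A, le_rfl, hxA, hyA⟩
    obtain ⟨F, hF, hFmax⟩ := Set.Finite.exists_maximalFor id S (Set.toFinite S) hSne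
    obtain ⟨hFE, hFcl, hFx, hFy⟩ := hF
    have hFne : F ≠ Set.univ := by
      intro h; exact hFx (h ▸ Set.mem_univ x)
    obtain ⟨z, hzF, hzE⟩ := haug F hFE hFne
    have hz : z = x ∨ z = y := by
      by_contra h
      push_neg at h
      have hmem : F ∪ {z} ∈ S := ⟨hzE, hFcl.trans Set.subset_union_left,
        by simp [hFx, Ne.symm h.1], by simp [hFy, Ne.symm h.2]⟩
      have := hFmax hmem Set.subset_union_left
      simp only [id] at this
      exact hzF (this (Set.mem_union_right F rfl))
    have hAF : A ⊆ F := (hext A).trans hFcl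
    rcases hz with rfl | rfl
    · -- z = x : then y ∈ cl (A ∪ {x}) ⊆ F ∪ {x}, contradiction
      have : y ∈ F ∪ {z} := hle (A ∪ {z}) (F ∪ {z}) hzE
        (Set.union_subset (hAF.trans Set.subset_union_left) Set.subset_union_right) hyx
      rcases this with h | h
      · exact hFy h
      · exact hxy (by simpa using h.symm)
    · -- z = y : then x ∈ cl (A ∪ {y}) ⊆ F ∪ {y}, contradiction
      have : x ∈ F ∪ {z} := hle (A ∪ {z}) (F ∪ {z}) hzE
        (Set.union_subset (hAF.trans Set.subset_union_left) Set.subset_union_right) hxAy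
      rcases this with h | h
      · exact hFx h
      · exact hxy (by simpa using h)
end

section
/- For a finite set P of points in ℝⁿ, the family E = { X ⊆ P : conv(X) ∩ P = X } is a convex geometry on P (the convex shelling). -/
/-- A convex geometry on a finite set `Z`: a family `E` of subsets of `Z` containing `∅`
and `Z`, closed under intersection, and satisfying the augmentation property. -/
def IsConvexGeometryOn {α : Type*} (Z : Set α) (E : Set (Set α)) : Prop :=
  (∀ X ∈ E, X ⊆ Z) ∧
  (∅ : Set α) ∈ E ∧ Z ∈ E ∧
  (∀ X ∈ E, ∀ Y ∈ E, X ∩ Y ∈ E) ∧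
  (∀ X ∈ E, X ≠ Z → ∃ z ∈ Z \ X, X ∪ {z} ∈ E)

/-- Key exchange lemma: if `z ∉ conv X`, `y ∈ conv (X ∪ {z})` and `z ∈ conv (X ∪ {y})`,
then `y = z`. -/
lemma convexShelling_key {V : Type*} [AddCommGroup V] [Module ℝ V] {X : Set V} {z y : V}
    (hz : z ∉ convexHull ℝ X) (hy : y ∈ convexHull ℝ (insert z X))
    (hzy : z ∈ convexHull ℝ (insert y X)) : y = z := by
  rcases X.eq_empty_or_nonempty with rfl | hX
  · rw [insert_empty_eq, convexHull_singleton, Set.mem_singleton_iff] at hy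
    exact hy
  · rw [convexHull_insert hX] at hy hzy
    rw [mem_convexJoin] at hy hzy
    obtain ⟨w, hw, x, hx, hyx⟩ := hy
    obtain ⟨w', hw', x', hx', hzx'⟩ := hzy
    rw [Set.mem_singleton_iff] at hw hw'
    rw [hw] at hyx
    rw [hw'] at hzx'
    obtain ⟨a, b, ha, hb, hab, hyeq⟩ := hyx
    obtain ⟨c, d, hc, hd, hcd, hzeq⟩ := hzx'
    rw [← hyeq] at hzeq
    by_cases hca : c * a = 1
    · have ha1 : a = 1 := by nlinarith
      have hb0 : b = 0 := by linarith
      rw [← hyeq, ha1, hb0]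
      simp
    · exfalso
      have hca' : c * a < 1 := lt_of_le_of_ne (by nlinarith) hca
      set e := 1 - c * a with he
      have hepos : 0 < e := by simp [he]; linarith
      rw [smul_add, smul_smul, smul_smul] at hzeq
      have h1 : e • z = (c * b) • x + d • x' := by
        rw [he]
        linear_combination (norm := module) -hzeq
      have h2 : z = (e⁻¹ * (c * b)) • x + (e⁻¹ * d) • x' := by
        calc z = e⁻¹ • (e • z) := by
                rw [smul_smul, inv_mul_cancel₀ hepos.ne', one_smul]
          _ = e⁻¹ • ((c * b) • x + d • x') := by rw [h1]
          _ = (e⁻¹ * (c * b)) • x + (e⁻¹ * d) • x' := by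
                rw [smul_add, smul_smul, smul_smul]
      have hmem : z ∈ convexHull ℝ X := by
        rw [h2]
        exact (convex_convexHull ℝ X) hx hx'
          (by positivity) (by positivity)
          (by field_simp; ring_nf; nlinarith)
      exact hz hmem

/-- The convex shelling of a finite point set `P ⊆ ℝⁿ` is a convex geometry on `P`. -/
theorem convexShelling_isConvexGeometry (n : ℕ) (P : Set (EuclideanSpace ℝ (Fin n)))
    (hP : P.Finite) :
    IsConvexGeometryOn P {X | X ⊆ P ∧ convexHull ℝ X ∩ P = X} := by
  refine ⟨fun X hX => hX.1, ⟨by simp, by simp⟩, ⟨Set.Subset.rfl, by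
    simp [Set.inter_eq_right.mpr (subset_convexHull ℝ P)]⟩, ?_, ?_⟩
  · rintro X ⟨hXP, hXE⟩ Y ⟨hYP, hYE⟩
    refine ⟨(Set.inter_subset_left).trans hXP, Set.Subset.antisymm ?_ ?_⟩
    · intro p hp
      constructor
      · rw [← hXE]
        exact ⟨convexHull_mono Set.inter_subset_left hp.1, hp.2⟩
      · rw [← hYE]
        exact ⟨convexHull_mono Set.inter_subset_right hp.1, hp.2⟩
    · exact Set.subset_inter (subset_convexHull ℝ _)
        ((Set.inter_subset_left).trans hXP)
  · rintro X ⟨hXP, hXE⟩ hXne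
    have hD : (P \ X).Nonempty := by
      rw [Set.diff_nonempty]
      intro h
      exact hXne (Set.Subset.antisymm hXP h)
    have hDfin : (P \ X).Finite := hP.sdiff
    obtain ⟨z, hzD, hzmin⟩ := Set.Finite.exists_minimalFor
      (fun z => (convexHull ℝ (insert z X) ∩ P).ncard) _ hDfin hD
    refine ⟨z, hzD, ⟨Set.union_subset hXP (by simpa using hzD.1), ?_⟩⟩
    rw [Set.union_singleton]
    have hzX : z ∉ convexHull ℝ X := fun h => hzD.2 (hXE ▸ ⟨h, hzD.1⟩)
    apply Set.Subset.antisymm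
    · rintro y ⟨hyc, hyP⟩
      by_contra hyn
      simp only [Set.mem_insert_iff, not_or] at hyn
      obtain ⟨hyz, hyX⟩ := hyn
      have hyD : y ∈ P \ X := ⟨hyP, hyX⟩
      -- conv (insert y X) ⊆ conv (insert z X)
      have hsub : convexHull ℝ (insert y X) ⊆ convexHull ℝ (insert z X) :=
        convexHull_min (Set.insert_subset hyc
          ((Set.subset_insert z X).trans (subset_convexHull ℝ _))) (convex_convexHull ℝ _)
      have hznot : z ∉ convexHull ℝ (insert y X) := fun h =>
        hyz (convexShelling_key hzX hyc h)
      have hss : convexHull ℝ (insert y X) ∩ P ⊂ convexHull ℝ (insert z X) ∩ P := by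
        refine ⟨Set.inter_subset_inter_left _ hsub, fun h => hznot ?_⟩
        exact (h ⟨subset_convexHull ℝ _ (Set.mem_insert z X), hzD.1⟩).1
      have hlt : (convexHull ℝ (insert y X) ∩ P).ncard <
          (convexHull ℝ (insert z X) ∩ P).ncard :=
        Set.ncard_lt_ncard hss (hP.inter_of_right _)
      have := hzmin (j := y) hyD (le_of_lt hlt)
      exact absurd this (not_le.mpr hlt)
    · exact Set.insert_subset ⟨subset_convexHull ℝ _ (Set.mem_insert z X), hzD.1⟩
        (Set.subset_inter ((Set.subset_insert z X).trans (subset_convexHull ℝ _)) hXP)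
end
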